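/- In the whole-page model of Algorithm 1, it is an invariant of every reachable state (from an initially consistent state where cache = disk = NVM and dirty = false) that: if dirty = false then the device named by latest_dev holds a version equal to the current cache version; and in all states the device named by latest_dev holds a version ≥ every version that was both written and subsequently synced or written back. -/

import Mathlib

/- Whole-page model of Algorithm 1: single page with version numbers,
   state = (cache, disk, nvm, dirty, latest_dev). -/

inductive Dev | disk | nvm
deriving DecidableEq

inductive Event
  | write (v : ℕ)   -- write a fresh version v to the cache
  | sync
  | writeback
  | crash
  | read
deriving DecidableEq

structure St where
  cache : ℕ
  disk  : ℕ
  nvm   : ℕ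
  dirty : Bool
  dev   : Dev

/-- The version held by the device named by `latest_dev`. -/
def deviceVal (s : St) : ℕ :=
  match s.dev with
  | .disk => s.disk
  | .nvm  => s.nvm

/-- Algorithm 1 transitions.  A crash erases the cache and recovery restores
    it from the device indicated by `latest_dev`. -/
def step (s : St) : Event → St
  | .write v   => { s with cache := v, dirty := true }
  | .writeback => { s with disk := s.cache, dirty := false, dev := .disk }
  | .sync      => if s.dirty then { s with nvm := s.cache, dirty := false, dev := .nvm } else s
  | .crash     => { s with cache := deviceVal s }
  | .read      => s

def run (s : St) (tr : List Event) : St := tr.foldl step s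

def StInv (s : St) : Prop :=
  deviceVal s ≤ s.cache ∧ (s.dirty = false → deviceVal s = s.cache)

def Fresh (s : St) (tr : List Event) : Prop :=
  ∀ t₁ u t₂, tr = t₁ ++ [Event.write u] ++ t₂ → (run s t₁).cache < u

def Ops (tr : List Event) : Prop :=
  ∀ e ∈ tr, (∃ u, e = Event.write u) ∨ e = Event.sync ∨ e = Event.writeback

theorem run_cons (s : St) (e : Event) (tr : List Event) :
    run s (e :: tr) = run (step s e) tr := rfl

theorem run_append (s : St) (a b : List Event) :
    run s (a ++ b) = run (run s a) b := List.foldl_append ..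

theorem fresh_congr {s : St} {l l' : List Event} (h : Fresh s l) (he : l = l') :
    Fresh s l' := he ▸ h

theorem ops_congr {l l' : List Event} (h : Ops l) (he : l = l') : Ops l' := he ▸ h

theorem fresh_prefix {s : St} {X Y : List Event} (h : Fresh s (X ++ Y)) : Fresh s X := by
  intro t₁ u t₂ hX
  exact h t₁ u (t₂ ++ Y) (by simp [hX])

theorem fresh_suffix {s : St} {X Y : List Event} (h : Fresh s (X ++ Y)) : Fresh (run s X) Y := by
  intro t₁ u t₂ hY
  have := h (X ++ t₁) u t₂ (by simp [hY])
  simpa [run_append] using this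

theorem ops_prefix {X Y : List Event} (h : Ops (X ++ Y)) : Ops X :=
  fun e he => h e (List.mem_append_left _ he)

theorem ops_suffix {X Y : List Event} (h : Ops (X ++ Y)) : Ops Y :=
  fun e he => h e (List.mem_append_right _ he)

theorem main_lemma : ∀ (tr : List Event) (s : St), StInv s → Ops tr → Fresh s tr →
    StInv (run s tr) ∧ deviceVal s ≤ deviceVal (run s tr) ∧ s.cache ≤ (run s tr).cache := by
  intro tr
  induction tr with
  | nil => intro s hI _ _; exact ⟨hI, le_refl _, le_refl _⟩
  | cons e tr ih =>
    intro s hI hops hfresh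
    have hops' : Ops tr := fun e' he' => hops e' (List.mem_cons_of_mem _ he')
    have hfresh' : Fresh (step s e) tr := by
      intro t₁ u t₂ h
      have := hfresh (e :: t₁) u t₂ (by simp [h])
      simpa [run_cons] using this
    have key : StInv (step s e) ∧ deviceVal s ≤ deviceVal (step s e) ∧ s.cache ≤ (step s e).cache := by
      rcases hI with ⟨h1, h2⟩
      rcases hops e List.mem_cons_self with ⟨u, rfl⟩ | rfl | rfl
      · have hlt : s.cache < u := by
          have := hfresh [] u tr (by simp)
          simpa [run] using this
        refine ⟨⟨?_, ?_⟩, ?_, ?_⟩ <;>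
          simp [step, deviceVal] <;> cases hd : s.dev <;>
            simp_all [deviceVal] <;> omega
      · by_cases hd : s.dirty
        · refine ⟨⟨?_, ?_⟩, ?_, ?_⟩ <;> simp [step, hd, deviceVal]
          exact h1
        · simp only [step, if_neg hd]
          exact ⟨⟨h1, h2⟩, le_refl _, le_refl _⟩
      · refine ⟨⟨?_, ?_⟩, ?_, ?_⟩ <;> simp [step, deviceVal]
        exact h1
    obtain ⟨hI', hdv, hc⟩ := key
    obtain ⟨a, b, c⟩ := ih (step s e) hI' hops' hfresh'
    exact ⟨by rwa [run_cons], by rw [run_cons]; exact le_trans hdv b,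
           by rw [run_cons]; exact le_trans hc c⟩

/-- Invariant of every state reachable from an initially
    consistent state (cache = disk = nvm, dirty = false) by finite sequences
    of write / writeback / sync transitions, where each write installs a fresh
    strictly larger version:
    (1) if dirty = false then the device named by latest_dev holds exactly the
        current cache version; and
    (2) the device named by latest_dev holds a version ≥ every version that
        was both written and subsequently synced or written back. -/
theorem algorithm1_invariant (s₀ : St) (tr : List Event)
    (hinit : s₀.cache = s₀.disk ∧ s₀.cache = s₀.nvm ∧ s₀.dirty = false)
    (hops : ∀ e ∈ tr, (∃ u, e = Event.write u) ∨ e = Event.sync ∨ e = Event.writeback)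
    (hfresh : ∀ t₁ u t₂, tr = t₁ ++ [Event.write u] ++ t₂ → (run s₀ t₁).cache < u) :
    let s := run s₀ tr
    ((s.dirty = false → deviceVal s = s.cache) ∧
     ∀ v t₁ e t₂ t₃, tr = t₁ ++ [Event.write v] ++ t₂ ++ [e] ++ t₃ →
       (e = Event.sync ∨ e = Event.writeback) → v ≤ deviceVal s) := by
  intro s
  have hInv0 : StInv s₀ := by
    rcases hinit with ⟨h1, h2, h3⟩
    exact ⟨by cases hd : s₀.dev <;> simp [deviceVal, hd, h1.symm.le, h2.symm.le],
           fun _ => by cases hd : s₀.dev <;> simp [deviceVal, hd, ← h1, ← h2]⟩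
  have hmain := main_lemma tr s₀ hInv0 hops hfresh
  constructor
  · exact hmain.1.2
  · intro v t₁ e t₂ t₃ htr hor
    subst htr
    set A := t₁ ++ [Event.write v] with hA
    have hsplit1 : A ++ t₂ ++ [e] ++ t₃ = A ++ (t₂ ++ [e] ++ t₃) := by
      simp [List.append_assoc]
    have hfresh' : Fresh s₀ (A ++ t₂ ++ [e] ++ t₃) := hfresh
    have hops' : Ops (A ++ t₂ ++ [e] ++ t₃) := hops
    have hfA : Fresh s₀ A := fresh_prefix (fresh_congr hfresh' hsplit1)
    have hoA : Ops A := ops_prefix (ops_congr hops' hsplit1)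
    have hIA := (main_lemma A s₀ hInv0 hoA hfA).1
    have hs1cache : (run s₀ A).cache = v := by
      have : run s₀ A = step (run s₀ t₁) (Event.write v) := by
        simp [hA, run_append, run]
      rw [this]; rfl
    have hrest : Fresh (run s₀ A) (t₂ ++ [e] ++ t₃) :=
      fresh_suffix (fresh_congr hfresh' hsplit1)
    have horest : Ops (t₂ ++ [e] ++ t₃) := ops_suffix (ops_congr hops' hsplit1)
    have hsplit2 : t₂ ++ [e] ++ t₃ = t₂ ++ ([e] ++ t₃) := by simp [List.append_assoc]
    have hf2 : Fresh (run s₀ A) t₂ := fresh_prefix (fresh_congr hrest hsplit2)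
    have ho2 : Ops t₂ := ops_prefix (ops_congr horest hsplit2)
    have h2 := main_lemma t₂ (run s₀ A) hIA ho2 hf2
    set s₂ := run (run s₀ A) t₂ with hs₂
    have hcache2 : v ≤ s₂.cache := hs1cache ▸ h2.2.2
    have hI2 : StInv s₂ := h2.1
    have hdev3 : v ≤ deviceVal (step s₂ e) := by
      rcases hor with rfl | rfl
      · by_cases hd : s₂.dirty
        · simpa [step, hd, deviceVal] using hcache2
        · simp only [step, if_neg hd]
          have := hI2.2 (by simpa using hd)
          omega
      · simpa [step, deviceVal] using hcache2
    have hP : run s₀ (A ++ t₂ ++ [e]) = step s₂ e := by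
      simp [run_append, hs₂, run]
    have hfP : Fresh s₀ (A ++ t₂ ++ [e]) := fresh_prefix hfresh'
    have hoP : Ops (A ++ t₂ ++ [e]) := ops_prefix hops'
    have hI3 : StInv (step s₂ e) := by
      have := (main_lemma _ s₀ hInv0 hoP hfP).1
      rwa [hP] at this
    have hf3 : Fresh (step s₂ e) t₃ := by
      have := fresh_suffix (X := A ++ t₂ ++ [e]) (Y := t₃) hfresh'
      rwa [hP] at this
    have ho3 : Ops t₃ := ops_suffix hops'
    have h3 := main_lemma t₃ (step s₂ e) hI3 ho3 hf3
    have hfinal : run s₀ (A ++ t₂ ++ [e] ++ t₃) = run (step s₂ e) t₃ := by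
      rw [run_append, hP]
    calc v ≤ deviceVal (step s₂ e) := hdev3
      _ ≤ deviceVal (run (step s₂ e) t₃) := h3.2.1
      _ = deviceVal s := by rw [← hfinal]
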